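/- Let F be a field of characteristic ≠ 2 and let W be the Weierstrass curve over F given by y² = x³ + p·x² + q·x + r with nonzero discriminant, and assume q² = 4·p·r. Let y₀ ∈ F satisfy y₀ ≠ 0 and y₀² = r, and let P be the point (0, y₀) of W. Then P is a point of exact order 3: P ≠ 0 and 3·P = 0 in the group of points of W. -/

import Mathlib

open Classical in
/-- **If `q² = 4pr` then `(0, y₀)` is a point of exact order 3 on
`y² = x³ + p·x² + q·x + r`.** (Kollár–Mella, Proposition 13, exceptional cases) -/
theorem three_torsion_point (F : Type*) [Field F] (hF : ringChar F ≠ 2) (p q r : F)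
    (W : WeierstrassCurve.Affine F)
    (hW : W = { a₁ := 0, a₂ := p, a₃ := 0, a₄ := q, a₆ := r })
    (hΔ : W.Δ ≠ 0) (hpqr : q ^ 2 = 4 * p * r)
    (y₀ : F) (hy₀ : y₀ ≠ 0) (hr : y₀ ^ 2 = r)
    (h : W.Nonsingular 0 y₀) :
    WeierstrassCurve.Affine.Point.some _ _ h ≠ 0 ∧
      (3 : ℕ) • WeierstrassCurve.Affine.Point.some _ _ h = 0 := by
  have h2 : (2 : F) ≠ 0 := Ring.two_ne_zero hF
  have hy2 : (2 : F) * y₀ ≠ 0 := mul_ne_zero h2 hy₀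
  have hy : y₀ ≠ W.negY 0 y₀ := by
    simp only [hW, WeierstrassCurve.Affine.negY]
    intro hc
    exact hy2 (by linear_combination hc)
  refine ⟨WeierstrassCurve.Affine.Point.some_ne_zero h, ?_⟩
  have h3 : (3 : ℕ) • WeierstrassCurve.Affine.Point.some _ _ h =
      WeierstrassCurve.Affine.Point.some _ _ h + WeierstrassCurve.Affine.Point.some _ _ h +
        WeierstrassCurve.Affine.Point.some _ _ h := by
    rw [show (3 : ℕ) = 2 + 1 from rfl, add_nsmul, two_nsmul, one_nsmul]
  rw [h3, WeierstrassCurve.Affine.Point.add_self_of_Y_ne hy]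
  have hslope : W.slope 0 0 y₀ y₀ = q / (2 * y₀) := by
    rw [WeierstrassCurve.Affine.slope_of_Y_ne rfl hy]
    simp [hW, WeierstrassCurve.Affine.negY]
    ring_nf
  have hx' : W.addX 0 0 (W.slope 0 0 y₀ y₀) = 0 := by
    rw [hslope]
    have key : (q / (2 * y₀)) ^ 2 = p := by
      rw [div_pow, div_eq_iff (pow_ne_zero 2 hy2)]
      linear_combination hpqr - 4 * p * hr
    simp only [hW, WeierstrassCurve.Affine.addX, key]
    ring
  apply WeierstrassCurve.Affine.Point.add_of_Y_eq hx'
  rw [WeierstrassCurve.Affine.addY, WeierstrassCurve.Affine.negAddY, hx']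
  norm_num
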